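/- Let G = (V, E) be an undirected graph with V = {v_1,…,v_{n'}}, E = {e_1,…,e_{m'}}, and let k be an integer with 1 ≤ k ≤ n'. Then G admits an independent set of size at least k if and only if the constructed SMI-Diverse instance admits a feasible and stable matching. -/

import Mathlib

open scoped Classical

noncomputable section

/-- An SMTI-Diverse instance: students `S`, colleges `C`, types `T`.
Preferences are encoded by rank functions (smaller rank = more preferred);
ties are allowed.  `acc` is the (symmetric) acceptability relation, `tau`
the 0/1 type vectors (encoded as `Bool`), `lq`/`uq` the lower/upper quota
vectors and `cap` the capacities. -/
structure SMTI (S C T : Type) [Fintype S] [Fintype C] [Fintype T] where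
  acc : S → C → Prop
  tau : S → T → Bool
  rankS : S → C → ℕ
  rankC : C → S → ℕ
  lq : C → T → ℕ
  uq : C → T → ℕ
  cap : C → ℕ

namespace SMTI

variable {S C T : Type} [Fintype S] [Fintype C] [Fintype T]

/-- `f : S → Option C` encodes a matching: every assigned college is acceptable. -/
def IsMatching (I : SMTI S C T) (f : S → Option C) : Prop :=
  ∀ u w, f u = some w → I.acc u w

/-- The set `M(w)` of students assigned to college `w`. -/
def assigned (I : SMTI S C T) (f : S → Option C) (w : C) : Finset S :=
  Finset.univ.filter fun u => f u = some w

/-- The number of students of type `z` assigned to `w`. -/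
def typeLoad (I : SMTI S C T) (f : S → Option C) (w : C) (z : T) : ℕ :=
  ∑ u ∈ I.assigned f w, (I.tau u z).toNat

/-- Feasibility: capacities respected and quotas met at all colleges. -/
def Feasible (I : SMTI S C T) (f : S → Option C) : Prop :=
  ∀ w, (I.assigned f w).card ≤ I.cap w ∧
    ∀ z, I.lq w z ≤ I.typeLoad f w z ∧ I.typeLoad f w z ≤ I.uq w z

/-- `u` strictly prefers `w` to its assigned college (in particular if unmatched). -/
def PrefersTo (I : SMTI S C T) (f : S → Option C) (u : S) (w : C) : Prop :=
  ∀ w', f u = some w' → I.rankS u w < I.rankS u w'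

/-- `{u,w}` is a blocking pair of `f` witnessed by `U' ⊆ M(w)`. -/
def BlocksWith (I : SMTI S C T) (f : S → Option C) (u : S) (w : C) (U' : Finset S) : Prop :=
  f u ≠ some w ∧ I.acc u w ∧ I.PrefersTo f u w ∧
  U' ⊆ I.assigned f w ∧
  (∀ u' ∈ U', I.rankC w u < I.rankC w u') ∧
  (I.assigned f w \ U').card + 1 ≤ I.cap w ∧
  ∀ z, I.lq w z ≤ (I.tau u z).toNat + ∑ u' ∈ I.assigned f w \ U', (I.tau u' z).toNat ∧
    (I.tau u z).toNat + ∑ u' ∈ I.assigned f w \ U', (I.tau u' z).toNat ≤ I.uq w z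

/-- `{u,w}` is a blocking pair of `f` (with some witness). -/
def BlockingPair (I : SMTI S C T) (f : S → Option C) (u : S) (w : C) : Prop :=
  ∃ U', I.BlocksWith f u w U'

/-- Stability: no blocking pair at all. -/
def Stable (I : SMTI S C T) (f : S → Option C) : Prop :=
  ∀ u w, ¬ I.BlockingPair f u w

end SMTI

section IndepSet

/-- Students: `v_i = Sum.inl (i, 0)`, `u_i = Sum.inl (i, 1)`, `x_i = Sum.inl (i, 2)`,
`y_i = Sum.inl (i, 3)`, plus special students `r1 = Sum.inr 0`, `r2 = Sum.inr 1`,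
`r3 = Sum.inr 2`. -/
abbrev ISSt (n : ℕ) := (Fin n × Fin 4) ⊕ Fin 3

/-- Colleges: `w = 0`, `p = 1`, `a = 2`, `b = 3`. -/
abbrev ISCo := Fin 4

/-- Types: vertex types `(i, 0)` (= type `2i−1`) and `(i, 1)` (= type `2i`),
edge types `Sum.inr (Sum.inl j)`, and two special types. -/
abbrev ISTy (n m : ℕ) := (Fin n × Fin 2) ⊕ (Fin m ⊕ Fin 2)

/-- The SMI-Diverse instance built from the graph with vertices `Fin n` and
edges `ed : Fin m → Fin n × Fin n`, and the parameter `k`. -/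
def ISInst (n m k : ℕ) (ed : Fin m → Fin n × Fin n) :
    SMTI (ISSt n) ISCo (ISTy n m) where
  acc := fun st c =>
    match st with
    | Sum.inl (_, kk) =>
        if kk = 0 then (c = 0 ∨ c = 1)        -- v_i : w ≻ p
        else if kk = 1 then (c = 0 ∨ c = 1)    -- u_i : p ≻ w
        else if kk = 2 then c = 0              -- x_i : only w
        else c = 1                             -- y_i : only p
    | Sum.inr kk =>
        if kk = 1 then (c = 0 ∨ c = 2 ∨ c = 3) -- r2 : b ≻ w ≻ a
        else (c = 2 ∨ c = 3)                   -- r1, r3 : a and b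
  tau := fun st t =>
    match st, t with
    | Sum.inl (i, kk), Sum.inl (i', kk') =>
        if kk = 0 then decide (i' = i ∧ kk' = 0)
        else if kk = 1 then decide (i' = i ∧ kk' = 1)
        else decide (i' = i)
    | Sum.inl (i, kk), Sum.inr (Sum.inl j) =>
        decide (kk = 0 ∧ ((ed j).1 = i ∨ (ed j).2 = i))
    | Sum.inl _, Sum.inr (Sum.inr _) => false
    | Sum.inr _, Sum.inl _ => false
    | Sum.inr _, Sum.inr (Sum.inl _) => false
    | Sum.inr kk, Sum.inr (Sum.inr z) =>
        if kk = 0 then decide (z = 0) else if kk = 1 then true else decide (z = 1)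
  rankS := fun st c =>
    match st with
    | Sum.inl (_, kk) =>
        if kk = 0 then (if c = 0 then 0 else if c = 1 then 1 else 9)   -- v_i : w ≻ p
        else if kk = 1 then (if c = 1 then 0 else if c = 0 then 1 else 9) -- u_i : p ≻ w
        else if kk = 2 then (if c = 0 then 0 else 9)
        else (if c = 1 then 0 else 9)
    | Sum.inr kk =>
        if kk = 0 then (if c = 3 then 0 else if c = 2 then 1 else 9)   -- r1 : b ≻ a
        else if kk = 1 then
          (if c = 3 then 0 else if c = 0 then 1 else if c = 2 then 2 else 9) -- r2 : b ≻ w ≻ a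
        else (if c = 2 then 0 else if c = 3 then 1 else 9)             -- r3 : a ≻ b
  rankC := fun c st =>
    if c = 0 then
      -- w : u_1 ≻ x_1 ≻ v_1 ≻ ⋯ ≻ u_n ≻ x_n ≻ v_n ≻ r2
      (match st with
       | Sum.inl (i, kk) =>
           if kk = 1 then 3 * (i : ℕ)
           else if kk = 2 then 3 * (i : ℕ) + 1
           else if kk = 0 then 3 * (i : ℕ) + 2
           else 9 + 3 * n
       | Sum.inr kk => if kk = 1 then 3 * n else 9 + 3 * n)
    else if c = 1 then
      -- p : v_1 ≻ y_1 ≻ u_1 ≻ ⋯ ≻ v_n ≻ y_n ≻ u_n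
      (match st with
       | Sum.inl (i, kk) =>
           if kk = 0 then 3 * (i : ℕ)
           else if kk = 3 then 3 * (i : ℕ) + 1
           else if kk = 1 then 3 * (i : ℕ) + 2
           else 9 + 3 * n
       | Sum.inr _ => 9 + 3 * n)
    else if c = 2 then
      -- a : r1 ≻ r2 ≻ r3
      (match st with
       | Sum.inr kk => if kk = 0 then 0 else if kk = 1 then 1 else 2
       | Sum.inl _ => 9)
    else
      -- b : r3 ≻ r2 ≻ r1
      (match st with
       | Sum.inr kk => if kk = 2 then 0 else if kk = 1 then 1 else 2
       | Sum.inl _ => 9)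
  lq := fun _ _ => 0
  uq := fun c t =>
    if c = 0 then 1
    else if c = 1 then
      (match t with
       | Sum.inl _ => 1
       | Sum.inr (Sum.inl _) => 2
       | Sum.inr (Sum.inr _) => 0)
    else
      (match t with
       | Sum.inr (Sum.inr _) => 1
       | _ => 0)
  cap := fun c =>
    if c = 0 then n + k else if c = 1 then 2 * n - k else if c = 2 then 1 else 2

end IndepSet

namespace SMTI

variable {S C T : Type} [Fintype S] [Fintype C] [Fintype T]

lemma mem_assigned (I : SMTI S C T) (f : S → Option C) (w : C) (u : S) :
    u ∈ I.assigned f w ↔ f u = some w := by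
  simp [SMTI.assigned]

lemma sum_toNat_eq_card (s : Finset S) (g : S → Bool) :
    ∑ u ∈ s, (g u).toNat = (s.filter fun u => g u = true).card := by
  rw [Finset.card_filter]
  exact Finset.sum_congr rfl fun u _ => by cases h : g u <;> simp [h]

lemma typeLoad_eq_card (I : SMTI S C T) (f : S → Option C) (w : C) (z : T) :
    I.typeLoad f w z = ((I.assigned f w).filter fun u => I.tau u z = true).card :=
  sum_toNat_eq_card _ _

lemma one_le_sum_toNat {s : Finset S} {g : S → Bool} {a : S}
    (ha : a ∈ s) (hg : g a = true) : 1 ≤ ∑ u ∈ s, (g u).toNat := by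
  have h := Finset.single_le_sum (f := fun u => (g u).toNat)
    (fun i _ => Nat.zero_le _) ha
  simp only [hg] at h
  exact h

lemma two_le_sum_toNat {s : Finset S} {g : S → Bool} {a b : S} (hab : a ≠ b)
    (ha : a ∈ s) (hb : b ∈ s) (hga : g a = true) (hgb : g b = true) :
    2 ≤ ∑ u ∈ s, (g u).toNat := by
  rw [sum_toNat_eq_card]
  have hsub : ({a, b} : Finset S) ⊆ s.filter fun u => g u = true := by
    intro x hx
    rcases Finset.mem_insert.1 hx with rfl | hx
    · exact Finset.mem_filter.2 ⟨ha, hga⟩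
    · rw [Finset.mem_singleton] at hx; subst hx
      exact Finset.mem_filter.2 ⟨hb, hgb⟩
  calc 2 = ({a, b} : Finset S).card := (Finset.card_pair hab).symm
    _ ≤ _ := Finset.card_le_card hsub

lemma sum_le_of_subset_singleton {s : Finset S} {a : S} (h : s ⊆ {a}) (g : S → ℕ) :
    ∑ u ∈ s, g u ≤ g a := by
  calc ∑ u ∈ s, g u ≤ ∑ u ∈ ({a} : Finset S), g u :=
        Finset.sum_le_sum_of_subset h
    _ = g a := Finset.sum_singleton _ _

end SMTI

namespace SMTI
variable {S C T : Type} [Fintype S] [Fintype C] [Fintype T]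

lemma block_type_absurd {s : Finset S} {g : S → Bool} {a : S}
    (ht : 1 + ∑ u ∈ s, (g u).toNat ≤ 1) (ha : a ∈ s) (hga : g a = true) : False := by
  have := one_le_sum_toNat ha hga
  omega

end SMTI

namespace SMTI
variable {S : Type} [Fintype S]

lemma sum_le_singleton_of_all_eq {s : Finset S} {a : S} (h : ∀ x ∈ s, x = a) (g : S → ℕ) :
    ∑ x ∈ s, g x ≤ g a := by
  classical
  have hsub : s ⊆ {a} := fun x hx => Finset.mem_singleton.2 (h x hx)
  calc ∑ x ∈ s, g x ≤ ∑ x ∈ ({a} : Finset S), g x := Finset.sum_le_sum_of_subset hsub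
    _ = g a := Finset.sum_singleton _ _

lemma card_le_one_of_all_eq {s : Finset S} {a : S} (h : ∀ x ∈ s, x = a) : s.card ≤ 1 :=
  Finset.card_le_one.2 fun x hx y hy => (h x hx).trans (h y hy).symm

end SMTI

/-- Projection of a student to its vertex index. -/
def projI (n : ℕ) (hn : 0 < n) : ISSt n → Fin n := fun st =>
  match st with
  | Sum.inl (i, _) => i
  | Sum.inr _ => ⟨0, hn⟩
section FwdDef

/-- The matching constructed from an independent set `V` of size `k`. -/
def fwdF (n : ℕ) (V : Finset (Fin n)) : ISSt n → Option ISCo := fun st =>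
  match st with
  | Sum.inl (i, kk) =>
      if kk = 0 then (if i ∈ V then some 0 else some 1)
      else if kk = 1 then (if i ∈ V then some 0 else some 1)
      else if kk = 2 then (if i ∈ V then none else some 0)
      else (if i ∈ V then some 1 else none)
  | Sum.inr kk => if kk = 0 then some 3 else if kk = 1 then some 2 else some 3

variable {n m k : ℕ} {ed : Fin m → Fin n × Fin n} (V : Finset (Fin n))

lemma assigned_fwd0 :
    (ISInst n m k ed).assigned (fwdF n V) 0 =
      (V.image fun i => (Sum.inl (i, 0) : ISSt n)) ∪
        (V.image fun i => (Sum.inl (i, 1) : ISSt n)) ∪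
        (Vᶜ.image fun i => (Sum.inl (i, 2) : ISSt n)) := by
  ext st
  rw [SMTI.mem_assigned]
  rcases st with ⟨i, kk⟩ | kk
  · fin_cases kk <;>
      by_cases hi : i ∈ V <;>
      simp [fwdF, hi]
  · fin_cases kk <;> simp [fwdF]

lemma assigned_fwd1 :
    (ISInst n m k ed).assigned (fwdF n V) 1 =
      (Vᶜ.image fun i => (Sum.inl (i, 0) : ISSt n)) ∪
        (Vᶜ.image fun i => (Sum.inl (i, 1) : ISSt n)) ∪
        (V.image fun i => (Sum.inl (i, 3) : ISSt n)) := by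
  ext st
  rw [SMTI.mem_assigned]
  rcases st with ⟨i, kk⟩ | kk
  · fin_cases kk <;>
      by_cases hi : i ∈ V <;>
      simp [fwdF, hi]
  · fin_cases kk <;> simp [fwdF]

lemma assigned_fwd2 :
    (ISInst n m k ed).assigned (fwdF n V) 2 = {Sum.inr 1} := by
  ext st
  rw [SMTI.mem_assigned]
  rcases st with ⟨i, kk⟩ | kk
  · fin_cases kk <;>
      by_cases hi : i ∈ V <;>
      simp [fwdF, hi]
  · fin_cases kk <;> simp [fwdF]

lemma assigned_fwd3 :
    (ISInst n m k ed).assigned (fwdF n V) 3 = {Sum.inr 0, Sum.inr 2} := by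
  ext st
  rw [SMTI.mem_assigned]
  rcases st with ⟨i, kk⟩ | kk
  · fin_cases kk <;>
      by_cases hi : i ∈ V <;>
      simp [fwdF, hi]
  · fin_cases kk <;> simp [fwdF]

end FwdDef
section FwdFeas

variable {n m k : ℕ} {ed : Fin m → Fin n × Fin n} (V : Finset (Fin n))

lemma card_fwd0 (hk : V.card = k) (hkn : k ≤ n) :
    ((ISInst n m k ed).assigned (fwdF n V) 0).card = n + k := by
  rw [assigned_fwd0]
  rw [Finset.card_union_of_disjoint, Finset.card_union_of_disjoint]
  · rw [Finset.card_image_of_injective _ (fun a b h => by simpa using h),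
      Finset.card_image_of_injective _ (fun a b h => by simpa using h),
      Finset.card_image_of_injective _ (fun a b h => by simpa using h),
      Finset.card_compl, hk]
    simp only [Fintype.card_fin]
    omega
  · rw [Finset.disjoint_right]
    intro x hy hx
    obtain ⟨d, hd, rfl⟩ := Finset.mem_image.1 hy
    simp at hx
  · rw [Finset.disjoint_right]
    intro x hy hx
    obtain ⟨d, hd, rfl⟩ := Finset.mem_image.1 hy
    simp at hx

lemma card_fwd1 (hk : V.card = k) (hkn : k ≤ n) :
    ((ISInst n m k ed).assigned (fwdF n V) 1).card = 2 * n - k := by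
  rw [assigned_fwd1]
  rw [Finset.card_union_of_disjoint, Finset.card_union_of_disjoint]
  · rw [Finset.card_image_of_injective _ (fun a b h => by simpa using h),
      Finset.card_image_of_injective _ (fun a b h => by simpa using h),
      Finset.card_image_of_injective _ (fun a b h => by simpa using h),
      Finset.card_compl, hk]
    simp only [Fintype.card_fin]
    omega
  · rw [Finset.disjoint_right]
    intro x hy hx
    obtain ⟨d, hd, rfl⟩ := Finset.mem_image.1 hy
    simp at hx
  · rw [Finset.disjoint_right]
    intro x hy hx
    obtain ⟨d, hd, rfl⟩ := Finset.mem_image.1 hy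
    simp at hx

end FwdFeas
section FwdTL

variable {n m k : ℕ} {ed : Fin m → Fin n × Fin n} (V : Finset (Fin n))

lemma tl0_vertex (i0 : Fin n) (t : Fin 2) :
    (ISInst n m k ed).typeLoad (fwdF n V) 0 (Sum.inl (i0, t)) ≤ 1 := by
  rw [SMTI.typeLoad_eq_card]
  refine Finset.card_le_one.2 fun a ha b hb => ?_
  have key : ∀ x ∈ ((ISInst n m k ed).assigned (fwdF n V) 0).filter
      (fun u => (ISInst n m k ed).tau u (Sum.inl (i0, t)) = true),
      x = (if t = 0 then (if i0 ∈ V then (Sum.inl (i0, 0) : ISSt n) else Sum.inl (i0, 2))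
           else (if i0 ∈ V then Sum.inl (i0, 1) else Sum.inl (i0, 2))) := by
    intro x hx
    rw [Finset.mem_filter, SMTI.mem_assigned] at hx
    obtain ⟨hxa, hxt⟩ := hx
    rcases x with ⟨i, kk⟩ | kk
    · fin_cases t <;> fin_cases kk
      · -- t=0, v_i
        have hii : i0 = i := by simpa [ISInst] using hxt
        subst hii
        by_cases hi : i0 ∈ V
        · simp [hi]
        · simp [fwdF, hi] at hxa
      · simp [ISInst] at hxt
      · -- t=0, x_i
        have hii : i0 = i := by simpa [ISInst] using hxt
        subst hii
        by_cases hi : i0 ∈ V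
        · simp [fwdF, hi] at hxa
        · simp [hi]
      · by_cases hi : i ∈ V <;> simp [fwdF, hi] at hxa
      · simp [ISInst] at hxt
      · -- t=1, u_i
        have hii : i0 = i := by simpa [ISInst] using hxt
        subst hii
        by_cases hi : i0 ∈ V
        · simp [hi]
        · simp [fwdF, hi] at hxa
      · -- t=1, x_i
        have hii : i0 = i := by simpa [ISInst] using hxt
        subst hii
        by_cases hi : i0 ∈ V
        · simp [fwdF, hi] at hxa
        · simp [hi]
      · by_cases hi : i ∈ V <;> simp [fwdF, hi] at hxa
    · fin_cases kk <;> simp [fwdF] at hxa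
  rw [key a ha, key b hb]

lemma tl0_edge (hind : ∀ j : Fin m, ¬((ed j).1 ∈ V ∧ (ed j).2 ∈ V)) (j : Fin m) :
    (ISInst n m k ed).typeLoad (fwdF n V) 0 (Sum.inr (Sum.inl j)) ≤ 1 := by
  rw [SMTI.typeLoad_eq_card]
  refine Finset.card_le_one.2 fun a ha b hb => ?_
  have key : ∀ x ∈ ((ISInst n m k ed).assigned (fwdF n V) 0).filter
      (fun u => (ISInst n m k ed).tau u (Sum.inr (Sum.inl j)) = true),
      x = (if (ed j).1 ∈ V then (Sum.inl ((ed j).1, 0) : ISSt n)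
           else Sum.inl ((ed j).2, 0)) := by
    intro x hx
    rw [Finset.mem_filter, SMTI.mem_assigned] at hx
    obtain ⟨hxa, hxt⟩ := hx
    rcases x with ⟨i, kk⟩ | kk
    · fin_cases kk
      · -- v_i
        have hii : (ed j).1 = i ∨ (ed j).2 = i := by simpa [ISInst] using hxt
        have hi : i ∈ V := by
          by_contra hi
          simp [fwdF, hi] at hxa
        rcases hii with h | h
        · subst h
          simp [hi]
        · subst h
          have h1 : (ed j).1 ∉ V := fun hc => hind j ⟨hc, hi⟩
          simp [h1]
      · simp [ISInst] at hxt
      · simp [ISInst] at hxt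
      · by_cases hi : i ∈ V <;> simp [fwdF, hi] at hxa
    · fin_cases kk <;> simp [fwdF] at hxa
  rw [key a ha, key b hb]

lemma tl0_special (zz : Fin 2) :
    (ISInst n m k ed).typeLoad (fwdF n V) 0 (Sum.inr (Sum.inr zz)) ≤ 1 := by
  rw [SMTI.typeLoad_eq_card]
  refine Finset.card_le_one.2 fun a ha b hb => ?_
  exfalso
  rw [Finset.mem_filter, SMTI.mem_assigned] at ha
  obtain ⟨hxa, hxt⟩ := ha
  rcases a with ⟨i, kk⟩ | kk
  · simp [ISInst] at hxt
  · fin_cases kk <;> simp [fwdF] at hxa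

end FwdTL
section FwdTL1

variable {n m k : ℕ} {ed : Fin m → Fin n × Fin n} (V : Finset (Fin n))

lemma tl1_vertex (i0 : Fin n) (t : Fin 2) :
    (ISInst n m k ed).typeLoad (fwdF n V) 1 (Sum.inl (i0, t)) ≤ 1 := by
  rw [SMTI.typeLoad_eq_card]
  refine Finset.card_le_one.2 fun a ha b hb => ?_
  have key : ∀ x ∈ ((ISInst n m k ed).assigned (fwdF n V) 1).filter
      (fun u => (ISInst n m k ed).tau u (Sum.inl (i0, t)) = true),
      x = (if i0 ∈ V then (Sum.inl (i0, 3) : ISSt n)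
           else if t = 0 then Sum.inl (i0, 0) else Sum.inl (i0, 1)) := by
    intro x hx
    rw [Finset.mem_filter, SMTI.mem_assigned] at hx
    obtain ⟨hxa, hxt⟩ := hx
    rcases x with ⟨i, kk⟩ | kk
    · fin_cases t <;> fin_cases kk
      · -- t=0, v_i
        have hii : i0 = i := by simpa [ISInst] using hxt
        subst hii
        by_cases hi : i0 ∈ V
        · simp [fwdF, hi] at hxa
        · simp [hi]
      · simp [ISInst] at hxt
      · by_cases hi : i ∈ V <;> simp [fwdF, hi] at hxa
      · -- t=0, y_i
        have hii : i0 = i := by simpa [ISInst] using hxt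
        subst hii
        by_cases hi : i0 ∈ V
        · simp [hi]
        · simp [fwdF, hi] at hxa
      · simp [ISInst] at hxt
      · -- t=1, u_i
        have hii : i0 = i := by simpa [ISInst] using hxt
        subst hii
        by_cases hi : i0 ∈ V
        · simp [fwdF, hi] at hxa
        · simp [hi]
      · by_cases hi : i ∈ V <;> simp [fwdF, hi] at hxa
      · -- t=1, y_i
        have hii : i0 = i := by simpa [ISInst] using hxt
        subst hii
        by_cases hi : i0 ∈ V
        · simp [hi]
        · simp [fwdF, hi] at hxa
    · fin_cases kk <;> simp [fwdF] at hxa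
  rw [key a ha, key b hb]

lemma tl1_edge (j : Fin m) :
    (ISInst n m k ed).typeLoad (fwdF n V) 1 (Sum.inr (Sum.inl j)) ≤ 2 := by
  rw [SMTI.typeLoad_eq_card]
  have hsub : ((ISInst n m k ed).assigned (fwdF n V) 1).filter
      (fun u => (ISInst n m k ed).tau u (Sum.inr (Sum.inl j)) = true) ⊆
      {Sum.inl ((ed j).1, 0), Sum.inl ((ed j).2, 0)} := by
    intro x hx
    rw [Finset.mem_filter, SMTI.mem_assigned] at hx
    obtain ⟨hxa, hxt⟩ := hx
    rcases x with ⟨i, kk⟩ | kk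
    · fin_cases kk
      · have hii : (ed j).1 = i ∨ (ed j).2 = i := by simpa [ISInst] using hxt
        rcases hii with h | h <;> subst h <;> simp
      · simp [ISInst] at hxt
      · simp [ISInst] at hxt
      · simp [ISInst] at hxt
    · fin_cases kk <;> simp [fwdF] at hxa
  calc _ ≤ ({Sum.inl ((ed j).1, 0), Sum.inl ((ed j).2, 0)} : Finset (ISSt n)).card :=
        Finset.card_le_card hsub
    _ ≤ 2 := (Finset.card_insert_le _ _).trans (by simp)

lemma tl1_special (zz : Fin 2) :
    (ISInst n m k ed).typeLoad (fwdF n V) 1 (Sum.inr (Sum.inr zz)) ≤ 0 := by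
  rw [SMTI.typeLoad_eq_card]
  refine le_of_eq (Finset.card_eq_zero.2 (Finset.eq_empty_of_forall_notMem fun x hx => ?_))
  rw [Finset.mem_filter, SMTI.mem_assigned] at hx
  obtain ⟨hxa, hxt⟩ := hx
  rcases x with ⟨i, kk⟩ | kk
  · simp [ISInst] at hxt
  · fin_cases kk <;> simp [fwdF] at hxa

lemma tl2 (z : ISTy n m) :
    (ISInst n m k ed).typeLoad (fwdF n V) 2 z = ((ISInst n m k ed).tau (Sum.inr 1) z).toNat := by
  rw [SMTI.typeLoad, assigned_fwd2, Finset.sum_singleton]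

lemma tl3 (z : ISTy n m) :
    (ISInst n m k ed).typeLoad (fwdF n V) 3 z =
      ((ISInst n m k ed).tau (Sum.inr 0) z).toNat +
        ((ISInst n m k ed).tau (Sum.inr 2) z).toNat := by
  rw [SMTI.typeLoad, assigned_fwd3, Finset.sum_pair (by simp)]

end FwdTL1
section FwdAssemble

variable {n m k : ℕ} {ed : Fin m → Fin n × Fin n} (V : Finset (Fin n))

lemma fwd_matching : (ISInst n m k ed).IsMatching (fwdF n V) := by
  intro u w hu
  rcases u with ⟨i, kk⟩ | kk
  · fin_cases kk <;> by_cases hi : i ∈ V <;>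
      simp [fwdF, hi] at hu <;> (try subst hu) <;> simp [ISInst]
  · fin_cases kk <;> simp [fwdF] at hu <;> (try subst hu) <;> simp [ISInst]

lemma fwd_feasible (hk : V.card = k) (hkn : k ≤ n)
    (hind : ∀ j : Fin m, ¬((ed j).1 ∈ V ∧ (ed j).2 ∈ V)) :
    (ISInst n m k ed).Feasible (fwdF n V) := by
  intro w
  fin_cases w
  · refine ⟨le_of_eq (card_fwd0 V hk hkn), fun z => ⟨Nat.zero_le _, ?_⟩⟩
    rcases z with ⟨i0, t⟩ | j | zz
    · exact tl0_vertex V i0 t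
    · exact tl0_edge V hind j
    · exact tl0_special V zz
  · refine ⟨le_of_eq (card_fwd1 V hk hkn), fun z => ⟨Nat.zero_le _, ?_⟩⟩
    rcases z with ⟨i0, t⟩ | j | zz
    · exact tl1_vertex V i0 t
    · exact tl1_edge V j
    · exact (tl1_special V zz).trans (Nat.zero_le _)
  · refine ⟨?_, fun z => ⟨Nat.zero_le _, ?_⟩⟩
    · have h2 : ((ISInst n m k ed).assigned (fwdF n V) 2).card = 1 := by
        rw [assigned_fwd2]; simp
      exact le_of_eq h2
    · have h2 : (ISInst n m k ed).typeLoad (fwdF n V) 2 z ≤ (ISInst n m k ed).uq 2 z := by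
        rw [tl2]
        rcases z with ⟨i0, t⟩ | j | zz <;> exact le_rfl
      exact h2
  · refine ⟨?_, fun z => ⟨Nat.zero_le _, ?_⟩⟩
    · have h3 : ((ISInst n m k ed).assigned (fwdF n V) 3).card = 2 := by
        rw [assigned_fwd3, Finset.card_pair (by simp)]
      exact le_of_eq h3
    · have h3 : (ISInst n m k ed).typeLoad (fwdF n V) 3 z ≤ (ISInst n m k ed).uq 3 z := by
        rw [tl3]
        rcases z with ⟨i0, t⟩ | j | zz
        · exact le_rfl
        · exact le_rfl
        · fin_cases zz <;> exact le_rfl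
      exact h3

end FwdAssemble
section FwdStable

variable {n m k : ℕ} {ed : Fin m → Fin n × Fin n} (V : Finset (Fin n))

lemma fwd_stable (hk : V.card = k) (hkn : k ≤ n)
    (hind : ∀ j : Fin m, ¬((ed j).1 ∈ V ∧ (ed j).2 ∈ V)) :
    (ISInst n m k ed).Stable (fwdF n V) := by
  have hkk4 : ∀ kk : Fin 4, kk = 0 ∨ kk = 1 ∨ kk = 2 ∨ kk = 3 := by decide
  have hkk3 : ∀ kk : Fin 3, kk = 0 ∨ kk = 1 ∨ kk = 2 := by decide
  rintro u c ⟨U', hne, hacc, hpref, hsub, hrank, hcap, htype⟩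
  rcases u with ⟨i, kk⟩ | kk
  · rcases hkk4 kk with rfl | rfl | rfl | rfl
    · -- v_i
      by_cases hi : i ∈ V
      · have h0 : fwdF n V (Sum.inl (i, 0)) = some 0 := by simp [fwdF, hi]
        have hpc := hpref 0 h0
        have e : (ISInst n m k ed).rankS (Sum.inl (i, 0)) 0 = 0 := rfl
        rw [e] at hpc
        exact Nat.not_lt_zero _ hpc
      · have h0 : fwdF n V (Sum.inl (i, 0)) = some 1 := by simp [fwdF, hi]
        have hpc := hpref 1 h0
        have hc : c = 0 ∨ c = 1 := by simpa [ISInst] using hacc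
        rcases hc with rfl | rfl
        · -- blocking attempt at w, killed by type (i,0) via x_i
          have ht := (htype (Sum.inl (i, 0))).2
          have hτ : (ISInst n m k ed).tau (Sum.inl (i, 0)) (Sum.inl (i, 0)) = true := by
            simp [ISInst]
          have hτx : (ISInst n m k ed).tau (Sum.inl (i, 2)) (Sum.inl (i, 0)) = true := by
            simp [ISInst]
          have huq : (ISInst n m k ed).uq 0 (Sum.inl (i, 0)) = 1 := rfl
          rw [hτ, huq, Bool.toNat_true] at ht
          refine SMTI.block_type_absurd ht ?_ hτx
          simp only [Finset.mem_sdiff, SMTI.mem_assigned]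
          refine ⟨by simp [fwdF, hi], fun hU => ?_⟩
          have hr := hrank _ hU
          have e1 : (ISInst n m k ed).rankC 0 (Sum.inl (i, 0)) = 3 * (i : ℕ) + 2 := rfl
          have e2 : (ISInst n m k ed).rankC 0 (Sum.inl (i, 2)) = 3 * (i : ℕ) + 1 := rfl
          rw [e1, e2] at hr
          omega
        · exact hne h0
    · -- u_i
      by_cases hi : i ∈ V
      · have h0 : fwdF n V (Sum.inl (i, 1)) = some 0 := by simp [fwdF, hi]
        have hpc := hpref 0 h0
        have hc : c = 0 ∨ c = 1 := by simpa [ISInst] using hacc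
        rcases hc with rfl | rfl
        · exact hne h0
        · -- blocking attempt at p, killed by type (i,1) via y_i
          have ht := (htype (Sum.inl (i, 1))).2
          have hτ : (ISInst n m k ed).tau (Sum.inl (i, 1)) (Sum.inl (i, 1)) = true := by
            simp [ISInst]
          have hτx : (ISInst n m k ed).tau (Sum.inl (i, 3)) (Sum.inl (i, 1)) = true := by
            simp [ISInst]
          have huq : (ISInst n m k ed).uq 1 (Sum.inl (i, 1)) = 1 := rfl
          rw [hτ, huq, Bool.toNat_true] at ht
          refine SMTI.block_type_absurd ht ?_ hτx
          simp only [Finset.mem_sdiff, SMTI.mem_assigned]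
          refine ⟨by simp [fwdF, hi], fun hU => ?_⟩
          have hr := hrank _ hU
          have e1 : (ISInst n m k ed).rankC 1 (Sum.inl (i, 1)) = 3 * (i : ℕ) + 2 := rfl
          have e2 : (ISInst n m k ed).rankC 1 (Sum.inl (i, 3)) = 3 * (i : ℕ) + 1 := rfl
          rw [e1, e2] at hr
          omega
      · have h0 : fwdF n V (Sum.inl (i, 1)) = some 1 := by simp [fwdF, hi]
        have hpc := hpref 1 h0
        have e : (ISInst n m k ed).rankS (Sum.inl (i, 1)) 1 = 0 := rfl
        rw [e] at hpc
        exact Nat.not_lt_zero _ hpc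
    · -- x_i
      by_cases hi : i ∈ V
      · -- unmatched, wants w; killed by type (i,1) via u_i
        have hc : c = 0 := by simpa [ISInst] using hacc
        subst hc
        have ht := (htype (Sum.inl (i, 1))).2
        have hτ : (ISInst n m k ed).tau (Sum.inl (i, 2)) (Sum.inl (i, 1)) = true := by
          simp [ISInst]
        have hτx : (ISInst n m k ed).tau (Sum.inl (i, 1)) (Sum.inl (i, 1)) = true := by
          simp [ISInst]
        have huq : (ISInst n m k ed).uq 0 (Sum.inl (i, 1)) = 1 := rfl
        rw [hτ, huq, Bool.toNat_true] at ht
        refine SMTI.block_type_absurd ht ?_ hτx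
        simp only [Finset.mem_sdiff, SMTI.mem_assigned]
        refine ⟨by simp [fwdF, hi], fun hU => ?_⟩
        have hr := hrank _ hU
        have e1 : (ISInst n m k ed).rankC 0 (Sum.inl (i, 2)) = 3 * (i : ℕ) + 1 := rfl
        have e2 : (ISInst n m k ed).rankC 0 (Sum.inl (i, 1)) = 3 * (i : ℕ) := rfl
        rw [e1, e2] at hr
        omega
      · have h0 : fwdF n V (Sum.inl (i, 2)) = some 0 := by simp [fwdF, hi]
        have hpc := hpref 0 h0
        have e : (ISInst n m k ed).rankS (Sum.inl (i, 2)) 0 = 0 := rfl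
        rw [e] at hpc
        exact Nat.not_lt_zero _ hpc
    · -- y_i
      by_cases hi : i ∈ V
      · have h0 : fwdF n V (Sum.inl (i, 3)) = some 1 := by simp [fwdF, hi]
        have hpc := hpref 1 h0
        have e : (ISInst n m k ed).rankS (Sum.inl (i, 3)) 1 = 0 := rfl
        rw [e] at hpc
        exact Nat.not_lt_zero _ hpc
      · -- unmatched, wants p; killed by type (i,0) via v_i
        have hc : c = 1 := by simpa [ISInst] using hacc
        subst hc
        have ht := (htype (Sum.inl (i, 0))).2
        have hτ : (ISInst n m k ed).tau (Sum.inl (i, 3)) (Sum.inl (i, 0)) = true := by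
          simp [ISInst]
        have hτx : (ISInst n m k ed).tau (Sum.inl (i, 0)) (Sum.inl (i, 0)) = true := by
          simp [ISInst]
        have huq : (ISInst n m k ed).uq 1 (Sum.inl (i, 0)) = 1 := rfl
        rw [hτ, huq, Bool.toNat_true] at ht
        refine SMTI.block_type_absurd ht ?_ hτx
        simp only [Finset.mem_sdiff, SMTI.mem_assigned]
        refine ⟨by simp [fwdF, hi], fun hU => ?_⟩
        have hr := hrank _ hU
        have e1 : (ISInst n m k ed).rankC 1 (Sum.inl (i, 3)) = 3 * (i : ℕ) + 1 := rfl
        have e2 : (ISInst n m k ed).rankC 1 (Sum.inl (i, 0)) = 3 * (i : ℕ) := rfl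
        rw [e1, e2] at hr
        omega
  · rcases hkk3 kk with rfl | rfl | rfl
    · -- r1, matched to b, top choice
      have h0 : fwdF n V (Sum.inr 0) = some 3 := rfl
      have hpc := hpref 3 h0
      have e : (ISInst n m k ed).rankS (Sum.inr 0) 3 = 0 := rfl
      rw [e] at hpc
      exact Nat.not_lt_zero _ hpc
    · -- r2, matched to a
      have h0 : fwdF n V (Sum.inr 1) = some 2 := rfl
      have hpc := hpref 2 h0
      have hc : c = 0 ∨ c = 2 ∨ c = 3 := by simpa [ISInst] using hacc
      rcases hc with rfl | rfl | rfl
      · -- r2 vs w : capacity is full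
        have hU : U' = ∅ := by
          rw [Finset.eq_empty_iff_forall_notMem]
          intro x hxU
          have hxM := hsub hxU
          have hr := hrank _ hxU
          have e1 : (ISInst n m k ed).rankC 0 (Sum.inr 1) = 3 * n := rfl
          rw [SMTI.mem_assigned] at hxM
          rcases x with ⟨i, kk⟩ | kk
          · have hrk : (ISInst n m k ed).rankC 0 (Sum.inl (i, kk)) ≤ 3 * (i : ℕ) + 2 := by
              rcases hkk4 kk with rfl | rfl | rfl | rfl
              · have e : (ISInst n m k ed).rankC 0 (Sum.inl (i, 0)) = 3 * (i : ℕ) + 2 := rfl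
                omega
              · have e : (ISInst n m k ed).rankC 0 (Sum.inl (i, 1)) = 3 * (i : ℕ) := rfl
                omega
              · have e : (ISInst n m k ed).rankC 0 (Sum.inl (i, 2)) = 3 * (i : ℕ) + 1 := rfl
                omega
              · exfalso
                by_cases hi : i ∈ V <;> simp [fwdF, hi] at hxM
            have hin : (i : ℕ) < n := i.isLt
            rw [e1] at hr
            omega
          · rcases hkk3 kk with rfl | rfl | rfl <;> simp [fwdF] at hxM
        subst hU
        simp only [Finset.sdiff_empty, card_fwd0 V hk hkn] at hcap
        have e2 : (ISInst n m k ed).cap 0 = n + k := rfl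
        rw [e2] at hcap
        omega
      · exact hne h0
      · -- r2 vs b : type s2 clash via r3
        have ht := (htype (Sum.inr (Sum.inr 1))).2
        have hτ : (ISInst n m k ed).tau (Sum.inr 1) (Sum.inr (Sum.inr 1)) = true := rfl
        have hτx : (ISInst n m k ed).tau (Sum.inr 2) (Sum.inr (Sum.inr 1)) = true := rfl
        have huq : (ISInst n m k ed).uq 3 (Sum.inr (Sum.inr 1)) = 1 := rfl
        rw [hτ, huq, Bool.toNat_true] at ht
        refine SMTI.block_type_absurd ht ?_ hτx
        simp only [Finset.mem_sdiff, SMTI.mem_assigned]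
        refine ⟨rfl, fun hU => ?_⟩
        have hr := hrank _ hU
        have e1 : (ISInst n m k ed).rankC 3 (Sum.inr 1) = 1 := rfl
        have e2 : (ISInst n m k ed).rankC 3 (Sum.inr 2) = 0 := rfl
        rw [e1, e2] at hr
        omega
    · -- r3, matched to b
      have h0 : fwdF n V (Sum.inr 2) = some 3 := rfl
      have hpc := hpref 3 h0
      have hc : c = 2 ∨ c = 3 := by simpa [ISInst] using hacc
      rcases hc with rfl | rfl
      · -- r3 vs a : capacity full with r2
        have hU : U' = ∅ := by
          rw [Finset.eq_empty_iff_forall_notMem]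
          intro x hxU
          have hxM := hsub hxU
          have hr := hrank _ hxU
          rw [SMTI.mem_assigned] at hxM
          rcases x with ⟨i, kk⟩ | kk
          · rcases hkk4 kk with rfl | rfl | rfl | rfl <;>
              by_cases hi : i ∈ V <;> simp [fwdF, hi] at hxM
          · rcases hkk3 kk with rfl | rfl | rfl
            · simp [fwdF] at hxM
            · have e1 : (ISInst n m k ed).rankC 2 (Sum.inr 2) = 2 := rfl
              have e2 : (ISInst n m k ed).rankC 2 (Sum.inr 1) = 1 := rfl
              rw [e1, e2] at hr
              omega
            · simp [fwdF] at hxM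
        subst hU
        have hcard : ((ISInst n m k ed).assigned (fwdF n V) 2).card = 1 := by
          rw [assigned_fwd2]; simp
        simp only [Finset.sdiff_empty, hcard] at hcap
        have e2 : (ISInst n m k ed).cap 2 = 1 := rfl
        rw [e2] at hcap
        omega
      · exact hne h0

end FwdStable
section Rev

lemma rev (n m k : ℕ) (ed : Fin m → Fin n × Fin n)
    (hloop : ∀ j, (ed j).1 ≠ (ed j).2) (hk1 : 1 ≤ k) (hk2 : k ≤ n)
    (f : ISSt n → Option ISCo)
    (hm : (ISInst n m k ed).IsMatching f)
    (hf : (ISInst n m k ed).Feasible f)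
    (hs : (ISInst n m k ed).Stable f) :
    ∃ V' : Finset (Fin n), k ≤ V'.card ∧
      ∀ j : Fin m, ¬((ed j).1 ∈ V' ∧ (ed j).2 ∈ V') := by
  have hkk4 : ∀ kk : Fin 4, kk = 0 ∨ kk = 1 ∨ kk = 2 ∨ kk = 3 := by decide
  have hkk3 : ∀ kk : Fin 3, kk = 0 ∨ kk = 1 ∨ kk = 2 := by decide
  have hacc2 : ∀ u : ISSt n, f u = some 2 →
      u = Sum.inr 0 ∨ u = Sum.inr 1 ∨ u = Sum.inr 2 := by
    intro u hu
    have ha := hm u 2 hu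
    rcases u with ⟨i, kk⟩ | kk
    · exfalso
      rcases hkk4 kk with rfl | rfl | rfl | rfl <;> simp [ISInst] at ha
    · rcases hkk3 kk with rfl | rfl | rfl <;> simp
  have hacc3 : ∀ u : ISSt n, f u = some 3 →
      u = Sum.inr 0 ∨ u = Sum.inr 1 ∨ u = Sum.inr 2 := by
    intro u hu
    have ha := hm u 3 hu
    rcases u with ⟨i, kk⟩ | kk
    · exfalso
      rcases hkk4 kk with rfl | rfl | rfl | rfl <;> simp [ISInst] at ha
    · rcases hkk3 kk with rfl | rfl | rfl <;> simp
  have hacc0 : ∀ u : ISSt n, f u = some 0 →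
      (∃ i : Fin n, u = Sum.inl (i, 0) ∨ u = Sum.inl (i, 1) ∨ u = Sum.inl (i, 2)) ∨
        u = Sum.inr 1 := by
    intro u hu
    have ha := hm u 0 hu
    rcases u with ⟨i, kk⟩ | kk
    · rcases hkk4 kk with rfl | rfl | rfl | rfl
      · exact Or.inl ⟨i, Or.inl rfl⟩
      · exact Or.inl ⟨i, Or.inr (Or.inl rfl)⟩
      · exact Or.inl ⟨i, Or.inr (Or.inr rfl)⟩
      · exfalso; simp [ISInst] at ha
    · rcases hkk3 kk with rfl | rfl | rfl
      · exfalso; simp [ISInst] at ha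
      · exact Or.inr rfl
      · exfalso; simp [ISInst] at ha
  have hbload : ∀ zz : Fin 2,
      (ISInst n m k ed).typeLoad f 3 (Sum.inr (Sum.inr zz)) ≤ 1 :=
    fun zz => ((hf 3).2 (Sum.inr (Sum.inr zz))).2
  -- Step 1 : r2 is not matched to b
  have hr2b : f (Sum.inr 1) ≠ some 3 := by
    intro h2
    by_cases h3a : f (Sum.inr 2) = some 2
    · -- r3 at a; r1 must be unmatched
      have h1n : f (Sum.inr 0) = none := by
        cases hfr : f (Sum.inr 0) with
        | none => rfl
        | some c =>
          exfalso
          have hc : c = 2 ∨ c = 3 := by simpa [ISInst] using hm _ _ hfr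
          rcases hc with rfl | rfl
          · have hcard := (hf 2).1
            have h2le : 2 ≤ ((ISInst n m k ed).assigned f 2).card := by
              have hsub2 : ({Sum.inr 0, Sum.inr 2} : Finset (ISSt n)) ⊆
                  (ISInst n m k ed).assigned f 2 := by
                intro x hx
                rcases Finset.mem_insert.1 hx with rfl | hx
                · exact (SMTI.mem_assigned _ _ _ _).2 hfr
                · rw [Finset.mem_singleton] at hx
                  subst hx
                  exact (SMTI.mem_assigned _ _ _ _).2 h3a
              calc 2 = ({Sum.inr 0, Sum.inr 2} : Finset (ISSt n)).card := by simp
                _ ≤ _ := Finset.card_le_card hsub2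
            have hcap2 : (ISInst n m k ed).cap 2 = 1 := rfl
            omega
          · have ht := hbload 0
            have h2le : 2 ≤ (ISInst n m k ed).typeLoad f 3 (Sum.inr (Sum.inr 0)) :=
              SMTI.two_le_sum_toNat (by simp) ((SMTI.mem_assigned _ _ _ _).2 hfr)
                ((SMTI.mem_assigned _ _ _ _).2 h2) rfl rfl
            omega
      -- blocking pair (r1, a) with witness {r3}
      refine hs (Sum.inr 0) 2 ⟨{Sum.inr 2}, by rw [h1n]; simp, by simp [ISInst], ?_, ?_, ?_, ?_, ?_⟩
      · intro w' hw'
        rw [h1n] at hw'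
        cases hw'
      · intro x hx
        rw [Finset.mem_singleton] at hx
        subst hx
        exact (SMTI.mem_assigned _ _ _ _).2 h3a
      · intro u' hu'
        rw [Finset.mem_singleton] at hu'
        subst hu'
        show (0 : ℕ) < 2
        norm_num
      · -- capacity : the set M(a) \ {r3} is empty
        refine Nat.succ_le_succ ?_
        refine le_trans (Finset.card_le_card (t := (∅ : Finset (ISSt n))) fun x hx => ?_)
          (by simp)
        exfalso
        simp only [Finset.mem_sdiff, SMTI.mem_assigned, Finset.mem_singleton] at hx
        obtain ⟨hx1, hx2⟩ := hx
        rcases hacc2 x hx1 with rfl | rfl | rfl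
        · rw [h1n] at hx1; cases hx1
        · rw [h2] at hx1; simp at hx1
        · exact hx2 rfl
      · intro z
        refine ⟨Nat.zero_le _, ?_⟩
        refine le_trans (Nat.add_le_add_left
          (le_of_eq (Finset.sum_eq_zero fun x hx => ?_)) _) ?_
        · exfalso
          simp only [Finset.mem_sdiff, SMTI.mem_assigned, Finset.mem_singleton] at hx
          obtain ⟨hx1, hx2⟩ := hx
          rcases hacc2 x hx1 with rfl | rfl | rfl
          · rw [h1n] at hx1; cases hx1
          · rw [h2] at hx1; simp at hx1
          · exact hx2 rfl
        · rcases z with ⟨i, t⟩ | j | zz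
          · exact le_rfl
          · exact le_rfl
          · fin_cases zz
            · exact le_rfl
            · exact Nat.zero_le _
    · -- r3 not at a; then r3 not at b either, and (r3, b) blocks with witness {r2}
      have h3b : f (Sum.inr 2) ≠ some 3 := by
        intro h3
        have ht := hbload 1
        have h2le : 2 ≤ (ISInst n m k ed).typeLoad f 3 (Sum.inr (Sum.inr 1)) :=
          SMTI.two_le_sum_toNat (by simp) ((SMTI.mem_assigned _ _ _ _).2 h2)
            ((SMTI.mem_assigned _ _ _ _).2 h3) rfl rfl
        omega
      refine hs (Sum.inr 2) 3 ⟨{Sum.inr 1}, h3b, by simp [ISInst], ?_, ?_, ?_, ?_, ?_⟩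
      · intro w' hw'
        have hc : w' = 2 ∨ w' = 3 := by simpa [ISInst] using hm _ _ hw'
        rcases hc with rfl | rfl
        · exact absurd hw' h3a
        · exact absurd hw' h3b
      · intro x hx
        rw [Finset.mem_singleton] at hx
        subst hx
        exact (SMTI.mem_assigned _ _ _ _).2 h2
      · intro u' hu'
        rw [Finset.mem_singleton] at hu'
        subst hu'
        show (0 : ℕ) < 1
        norm_num
      · -- capacity : M(b) \ {r2} ⊆ {r1}
        refine le_trans (Nat.add_le_add_right
          (SMTI.card_le_one_of_all_eq (a := Sum.inr 0) fun x hx => ?_) 1) ?_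
        · simp only [Finset.mem_sdiff, SMTI.mem_assigned, Finset.mem_singleton] at hx
          obtain ⟨hx1, hx2⟩ := hx
          rcases hacc3 x hx1 with rfl | rfl | rfl
          · rfl
          · exact absurd rfl hx2
          · exact absurd hx1 h3b
        · exact le_rfl
      · intro z
        refine ⟨Nat.zero_le _, ?_⟩
        refine le_trans (Nat.add_le_add_left
          (SMTI.sum_le_singleton_of_all_eq (a := Sum.inr 0) (fun x hx => ?_) _) _) ?_
        · simp only [Finset.mem_sdiff, SMTI.mem_assigned, Finset.mem_singleton] at hx
          obtain ⟨hx1, hx2⟩ := hx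
          rcases hacc3 x hx1 with rfl | rfl | rfl
          · rfl
          · exact absurd rfl hx2
          · exact absurd hx1 h3b
        · rcases z with ⟨i, t⟩ | j | zz
          · exact le_rfl
          · exact le_rfl
          · fin_cases zz
            · exact le_rfl
            · exact le_rfl
  -- Step 2 : r2 is not matched to w
  have hr2w : f (Sum.inr 1) ≠ some 0 := by
    intro h2
    by_cases h3b : f (Sum.inr 2) = some 3
    · by_cases h1a : f (Sum.inr 0) = some 2
      · -- (r1, b) blocks with empty witness
        refine hs (Sum.inr 0) 3 ⟨∅, by rw [h1a]; simp, by simp [ISInst], ?_,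
          Finset.empty_subset _, by simp, ?_, ?_⟩
        · intro w' hw'
          rw [h1a] at hw'
          obtain rfl : (2 : ISCo) = w' := Option.some.inj hw'
          show (0 : ℕ) < 1
          norm_num
        · -- capacity : M(b) ⊆ {r3}
          refine le_trans (Nat.add_le_add_right
            (SMTI.card_le_one_of_all_eq (a := Sum.inr 2) fun x hx => ?_) 1) ?_
          · simp only [Finset.sdiff_empty, SMTI.mem_assigned] at hx
            rcases hacc3 x hx with rfl | rfl | rfl
            · rw [h1a] at hx; simp at hx
            · rw [h2] at hx; simp at hx
            · rfl
          · exact le_rfl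
        · intro z
          refine ⟨Nat.zero_le _, ?_⟩
          refine le_trans (Nat.add_le_add_left
            (SMTI.sum_le_singleton_of_all_eq (a := Sum.inr 2) (fun x hx => ?_) _) _) ?_
          · simp only [Finset.sdiff_empty, SMTI.mem_assigned] at hx
            rcases hacc3 x hx with rfl | rfl | rfl
            · rw [h1a] at hx; simp at hx
            · rw [h2] at hx; simp at hx
            · rfl
          · rcases z with ⟨i, t⟩ | j | zz
            · exact le_rfl
            · exact le_rfl
            · fin_cases zz
              · exact le_rfl
              · exact le_rfl
      · -- (r3, a) blocks with empty witness
        refine hs (Sum.inr 2) 2 ⟨∅, by rw [h3b]; simp, by simp [ISInst], ?_,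
          Finset.empty_subset _, by simp, ?_, ?_⟩
        · intro w' hw'
          rw [h3b] at hw'
          obtain rfl : (3 : ISCo) = w' := Option.some.inj hw'
          show (0 : ℕ) < 1
          norm_num
        · -- capacity : M(a) is empty
          refine Nat.succ_le_succ ?_
          refine le_trans (Finset.card_le_card (t := (∅ : Finset (ISSt n))) fun x hx => ?_)
            (by simp)
          exfalso
          simp only [Finset.sdiff_empty, SMTI.mem_assigned] at hx
          rcases hacc2 x hx with rfl | rfl | rfl
          · exact h1a hx
          · rw [h2] at hx; simp at hx
          · rw [h3b] at hx; simp at hx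
        · intro z
          refine ⟨Nat.zero_le _, ?_⟩
          refine le_trans (Nat.add_le_add_left
            (le_of_eq (Finset.sum_eq_zero fun x hx => ?_)) _) ?_
          · exfalso
            simp only [Finset.sdiff_empty, SMTI.mem_assigned] at hx
            rcases hacc2 x hx with rfl | rfl | rfl
            · exact h1a hx
            · rw [h2] at hx; simp at hx
            · rw [h3b] at hx; simp at hx
          · rcases z with ⟨i, t⟩ | j | zz
            · exact le_rfl
            · exact le_rfl
            · fin_cases zz
              · exact Nat.zero_le _
              · exact le_rfl
    · by_cases h3a : f (Sum.inr 2) = some 2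
      · -- (r2, b) blocks with witness M(b)
        refine hs (Sum.inr 1) 3 ⟨(ISInst n m k ed).assigned f 3, by rw [h2]; simp,
          by simp [ISInst], ?_, Finset.Subset.refl _, ?_, ?_, ?_⟩
        · intro w' hw'
          rw [h2] at hw'
          obtain rfl : (0 : ISCo) = w' := Option.some.inj hw'
          show (0 : ℕ) < 1
          norm_num
        · intro u' hu'
          rw [SMTI.mem_assigned] at hu'
          rcases hacc3 u' hu' with rfl | rfl | rfl
          · show (1 : ℕ) < 2
            norm_num
          · rw [h2] at hu'; simp at hu'
          · exact absurd hu' h3b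
        · simp only [Finset.sdiff_self, Finset.card_empty]
          exact Nat.succ_le_succ (Nat.zero_le _)
        · intro z
          refine ⟨Nat.zero_le _, ?_⟩
          refine le_trans (Nat.add_le_add_left
            (le_of_eq (Finset.sum_eq_zero fun x hx => ?_)) _) ?_
          · simp only [Finset.sdiff_self, Finset.notMem_empty] at hx
          · rcases z with ⟨i, t⟩ | j | zz
            · exact le_rfl
            · exact le_rfl
            · exact le_rfl
      · -- (r3, b) blocks with witness M(b)
        refine hs (Sum.inr 2) 3 ⟨(ISInst n m k ed).assigned f 3, h3b,
          by simp [ISInst], ?_, Finset.Subset.refl _, ?_, ?_, ?_⟩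
        · intro w' hw'
          have hc : w' = 2 ∨ w' = 3 := by simpa [ISInst] using hm _ _ hw'
          rcases hc with rfl | rfl
          · exact absurd hw' h3a
          · exact absurd hw' h3b
        · intro u' hu'
          rw [SMTI.mem_assigned] at hu'
          rcases hacc3 u' hu' with rfl | rfl | rfl
          · show (0 : ℕ) < 2
            norm_num
          · rw [h2] at hu'; simp at hu'
          · exact absurd hu' h3b
        · simp only [Finset.sdiff_self, Finset.card_empty]
          exact Nat.succ_le_succ (Nat.zero_le _)
        · intro z
          refine ⟨Nat.zero_le _, ?_⟩
          refine le_trans (Nat.add_le_add_left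
            (le_of_eq (Finset.sum_eq_zero fun x hx => ?_)) _) ?_
          · simp only [Finset.sdiff_self, Finset.notMem_empty] at hx
          · rcases z with ⟨i, t⟩ | j | zz
            · exact le_rfl
            · exact le_rfl
            · fin_cases zz
              · exact Nat.zero_le _
              · exact le_rfl
  -- Step 3 : r2 strictly prefers w to its assignment
  have hpref20 : (ISInst n m k ed).PrefersTo f (Sum.inr 1) 0 := by
    intro w' hw'
    have hc : w' = 0 ∨ w' = 2 ∨ w' = 3 := by simpa [ISInst] using hm _ _ hw'
    rcases hc with rfl | rfl | rfl
    · exact absurd hw' hr2w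
    · show (1 : ℕ) < 2
      norm_num
    · exact absurd hw' hr2b
  -- Step 4 : w is full
  have hcard0 : n + k ≤ ((ISInst n m k ed).assigned f 0).card := by
    by_contra hlt
    push_neg at hlt
    refine hs (Sum.inr 1) 0 ⟨∅, hr2w, by simp [ISInst], hpref20,
      Finset.empty_subset _, by simp, ?_, ?_⟩
    · simp only [Finset.sdiff_empty]
      have hcap0 : (ISInst n m k ed).cap 0 = n + k := rfl
      omega
    · intro z
      refine ⟨Nat.zero_le _, ?_⟩
      rcases z with ⟨i, t⟩ | j | zz
      · have ht := ((hf 0).2 (Sum.inl (i, t))).2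
        have hτ : (ISInst n m k ed).tau (Sum.inr 1) (Sum.inl (i, t)) = false := rfl
        rw [hτ, Bool.toNat_false, Nat.zero_add]
        simp only [Finset.sdiff_empty]
        exact ht
      · have ht := ((hf 0).2 (Sum.inr (Sum.inl j))).2
        have hτ : (ISInst n m k ed).tau (Sum.inr 1) (Sum.inr (Sum.inl j)) = false := rfl
        rw [hτ, Bool.toNat_false, Nat.zero_add]
        simp only [Finset.sdiff_empty]
        exact ht
      · have hτ : (ISInst n m k ed).tau (Sum.inr 1) (Sum.inr (Sum.inr zz)) = true := rfl
        rw [hτ, Bool.toNat_true]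
        refine le_trans (Nat.add_le_add_left
          (le_of_eq (Finset.sum_eq_zero fun x hx => ?_)) _) ?_
        · simp only [Finset.sdiff_empty, SMTI.mem_assigned] at hx
          rcases hacc0 x hx with ⟨i', rfl | rfl | rfl⟩ | rfl
          · rfl
          · rfl
          · rfl
          · exact absurd hx hr2w
        · exact le_rfl
  -- Step 5 : counting
  have hn0 : 0 < n := lt_of_lt_of_le hk1 hk2
  refine ⟨Finset.univ.filter (fun i : Fin n =>
      Sum.inl (i, 0) ∈ (ISInst n m k ed).assigned f 0 ∧
      Sum.inl (i, 1) ∈ (ISInst n m k ed).assigned f 0), ?_, ?_⟩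
  · -- cardinality
    have hfib := Finset.card_eq_sum_card_fiberwise
      (f := projI n hn0) (s := (ISInst n m k ed).assigned f 0)
      (t := Finset.univ) (fun x _ => Finset.mem_univ _)
    have hbound : ∀ i : Fin n,
        (((ISInst n m k ed).assigned f 0).filter (fun st => projI n hn0 st = i)).card ≤
          (if Sum.inl (i, 0) ∈ (ISInst n m k ed).assigned f 0 ∧
              Sum.inl (i, 1) ∈ (ISInst n m k ed).assigned f 0 then 2 else 1) := by
      intro i
      have hmem : ∀ x ∈ ((ISInst n m k ed).assigned f 0).filter
          (fun st => projI n hn0 st = i),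
          x = Sum.inl (i, 0) ∨ x = Sum.inl (i, 1) ∨ x = Sum.inl (i, 2) := by
        intro x hx
        rw [Finset.mem_filter] at hx
        obtain ⟨hx0, hxπ⟩ := hx
        rw [SMTI.mem_assigned] at hx0
        rcases hacc0 x hx0 with ⟨i', rfl | rfl | rfl⟩ | rfl
        · have hii : i' = i := hxπ
          subst hii
          exact Or.inl rfl
        · have hii : i' = i := hxπ
          subst hii
          exact Or.inr (Or.inl rfl)
        · have hii : i' = i := hxπ
          subst hii
          exact Or.inr (Or.inr rfl)
        · exact absurd hx0 hr2w
      have hvx : ¬(Sum.inl (i, 0) ∈ (ISInst n m k ed).assigned f 0 ∧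
          Sum.inl (i, 2) ∈ (ISInst n m k ed).assigned f 0) := by
        rintro ⟨hv, hx⟩
        have ht := ((hf 0).2 (Sum.inl (i, 0))).2
        have huq : (ISInst n m k ed).uq 0 (Sum.inl (i, 0)) = 1 := rfl
        have h2le : 2 ≤ (ISInst n m k ed).typeLoad f 0 (Sum.inl (i, 0)) :=
          SMTI.two_le_sum_toNat (by simp) hv hx (by simp [ISInst]) (by simp [ISInst])
        omega
      have hux : ¬(Sum.inl (i, 1) ∈ (ISInst n m k ed).assigned f 0 ∧
          Sum.inl (i, 2) ∈ (ISInst n m k ed).assigned f 0) := by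
        rintro ⟨hu, hx⟩
        have ht := ((hf 0).2 (Sum.inl (i, 1))).2
        have huq : (ISInst n m k ed).uq 0 (Sum.inl (i, 1)) = 1 := rfl
        have h2le : 2 ≤ (ISInst n m k ed).typeLoad f 0 (Sum.inl (i, 1)) :=
          SMTI.two_le_sum_toNat (by simp) hu hx (by simp [ISInst]) (by simp [ISInst])
        omega
      by_cases hx2 : Sum.inl (i, 2) ∈ (ISInst n m k ed).assigned f 0
      · have h1 : (((ISInst n m k ed).assigned f 0).filter
            (fun st => projI n hn0 st = i)).card ≤ 1 := by
          refine SMTI.card_le_one_of_all_eq (a := Sum.inl (i, 2)) fun x hx => ?_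
          rcases hmem x hx with rfl | rfl | rfl
          · exact absurd ⟨(Finset.mem_filter.1 hx).1, hx2⟩ hvx
          · exact absurd ⟨(Finset.mem_filter.1 hx).1, hx2⟩ hux
          · rfl
        split_ifs <;> omega
      · by_cases hv : Sum.inl (i, 0) ∈ (ISInst n m k ed).assigned f 0 ∧
            Sum.inl (i, 1) ∈ (ISInst n m k ed).assigned f 0
        · rw [if_pos hv]
          refine le_trans (Finset.card_le_card
            (t := {Sum.inl (i, 0), Sum.inl (i, 1)}) fun x hx => ?_) ?_
          · rcases hmem x hx with rfl | rfl | rfl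
            · simp
            · simp
            · exact absurd (Finset.mem_filter.1 hx).1 hx2
          · exact (Finset.card_insert_le _ _).trans (by simp)
        · rw [if_neg hv]
          by_cases hv0 : Sum.inl (i, 0) ∈ (ISInst n m k ed).assigned f 0
          · refine SMTI.card_le_one_of_all_eq (a := Sum.inl (i, 0)) fun x hx => ?_
            rcases hmem x hx with rfl | rfl | rfl
            · rfl
            · exact absurd ⟨hv0, (Finset.mem_filter.1 hx).1⟩ hv
            · exact absurd (Finset.mem_filter.1 hx).1 hx2
          · refine SMTI.card_le_one_of_all_eq (a := Sum.inl (i, 1)) fun x hx => ?_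
            rcases hmem x hx with rfl | rfl | rfl
            · exact absurd (Finset.mem_filter.1 hx).1 hv0
            · rfl
            · exact absurd (Finset.mem_filter.1 hx).1 hx2
    have hsum_le : ∑ i : Fin n, (((ISInst n m k ed).assigned f 0).filter
        (fun st => projI n hn0 st = i)).card ≤
        ∑ i : Fin n, (if Sum.inl (i, 0) ∈ (ISInst n m k ed).assigned f 0 ∧
            Sum.inl (i, 1) ∈ (ISInst n m k ed).assigned f 0 then 2 else 1) :=
      Finset.sum_le_sum fun i _ => hbound i
    have hsum_eq : ∑ i : Fin n, (if Sum.inl (i, 0) ∈ (ISInst n m k ed).assigned f 0 ∧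
        Sum.inl (i, 1) ∈ (ISInst n m k ed).assigned f 0 then 2 else 1 : ℕ) =
        n + (Finset.univ.filter (fun i : Fin n =>
          Sum.inl (i, 0) ∈ (ISInst n m k ed).assigned f 0 ∧
          Sum.inl (i, 1) ∈ (ISInst n m k ed).assigned f 0)).card := by
      have hrw : ∀ i : Fin n, (if Sum.inl (i, 0) ∈ (ISInst n m k ed).assigned f 0 ∧
          Sum.inl (i, 1) ∈ (ISInst n m k ed).assigned f 0 then 2 else 1 : ℕ) =
          1 + (if Sum.inl (i, 0) ∈ (ISInst n m k ed).assigned f 0 ∧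
          Sum.inl (i, 1) ∈ (ISInst n m k ed).assigned f 0 then 1 else 0) := by
        intro i
        split_ifs <;> rfl
      rw [Finset.sum_congr rfl fun i _ => hrw i, Finset.sum_add_distrib,
        Finset.sum_const, Finset.sum_boole]
      simp
    omega
  · -- independence
    intro j hj
    rw [Finset.mem_filter, Finset.mem_filter] at hj
    obtain ⟨⟨-, hv1, -⟩, ⟨-, hv2, -⟩⟩ := hj
    have ht := ((hf 0).2 (Sum.inr (Sum.inl j))).2
    have huq : (ISInst n m k ed).uq 0 (Sum.inr (Sum.inl j)) = 1 := rfl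
    have h2le : 2 ≤ (ISInst n m k ed).typeLoad f 0 (Sum.inr (Sum.inl j)) := by
      refine SMTI.two_le_sum_toNat (a := Sum.inl ((ed j).1, 0))
        (b := Sum.inl ((ed j).2, 0)) ?_ hv1 hv2 ?_ ?_
      · simp [hloop j]
      · simp [ISInst]
      · simp [ISInst]
    omega

end Rev

/-- Let `G` be a graph on vertices `Fin n` with edges
`ed : Fin m → Fin n × Fin n` (loopless, with pairwise distinct edges) and let
`1 ≤ k ≤ n`.  Then `G` has an independent set of size at least `k` iff the
constructed SMI-Diverse instance admits a feasible and stable matching. -/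
theorem stmt11 (n m k : ℕ) (ed : Fin m → Fin n × Fin n)
    (hloop : ∀ j, (ed j).1 ≠ (ed j).2)
    (hedinj : ∀ j j' : Fin m,
      ({(ed j).1, (ed j).2} : Finset (Fin n)) = {(ed j').1, (ed j').2} → j = j')
    (hk1 : 1 ≤ k) (hk2 : k ≤ n) :
    (∃ V' : Finset (Fin n), k ≤ V'.card ∧
        ∀ j : Fin m, ¬((ed j).1 ∈ V' ∧ (ed j).2 ∈ V')) ↔
      ∃ f : ISSt n → Option ISCo,
        (ISInst n m k ed).IsMatching f ∧ (ISInst n m k ed).Feasible f ∧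
        (ISInst n m k ed).Stable f := by
  constructor
  · rintro ⟨V', hVk, hVind⟩
    obtain ⟨V, hVsub, hVcard⟩ := Finset.exists_subset_card_eq hVk
    have hind : ∀ j : Fin m, ¬((ed j).1 ∈ V ∧ (ed j).2 ∈ V) :=
      fun j hj => hVind j ⟨hVsub hj.1, hVsub hj.2⟩
    exact ⟨fwdF n V, fwd_matching V, fwd_feasible V hVcard hk2 hind,
      fwd_stable V hVcard hk2 hind⟩
  · rintro ⟨f, hm, hf, hs⟩
    exact rev n m k ed hloop hk1 hk2 f hm hf hs
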